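/- Let n and m be nonzero integers and let p be a prime with ν_p(n) = ν_p(m). Then for every natural number l there exist a finite group Q and a group homomorphism φ : BS(n,m) → Q such that the order of φ(a) is exactly p^l, where a is the first generator of BS(n,m). -/

import Mathlib

/-- The single relator `a^n t a^{-m} t⁻¹` of the Baumslag–Solitar group `BS(n,m)`,
with generator `0 = a` and `1 = t`. -/
def BSRel (n m : ℤ) : Set (FreeGroup (Fin 2)) :=
  {FreeGroup.of 0 ^ n * FreeGroup.of 1 * FreeGroup.of 0 ^ (-m) * (FreeGroup.of 1)⁻¹}

/-- The Baumslag–Solitar group `BS(n,m) = ⟨a, t ∣ a^n = t a^m t⁻¹⟩`. -/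
abbrev BS (n m : ℤ) := PresentedGroup (BSRel n m)

/-- The first generator `a` of `BS(n,m)`. -/
abbrev BS.a (n m : ℤ) : BS n m := PresentedGroup.of 0

lemma orderOf_addLeft' {α : Type*} [AddGroup α] (a : α) :
    orderOf (Equiv.addLeft a) = addOrderOf a := by
  let ψ : Multiplicative α →* Equiv.Perm α :=
    { toFun := fun x => Equiv.addLeft x.toAdd
      map_one' := Equiv.addLeft_zero
      map_mul' := fun x y => Equiv.addLeft_add _ _ }
  have hinj : Function.Injective ψ := by
    intro x y h
    have := congrArg (fun e : Equiv.Perm α => e 0) h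
    simpa [ψ] using this
  have := orderOf_injective ψ hinj (Multiplicative.ofAdd a)
  simpa [ψ] using this

lemma Equiv.zpow_addLeft {α : Type*} [AddGroup α] (a : α) (n : ℤ) :
    Equiv.addLeft a ^ n = Equiv.addLeft (n • a) := by
  let ψ : Multiplicative α →* Equiv.Perm α :=
    { toFun := fun x => Equiv.addLeft x.toAdd
      map_one' := Equiv.addLeft_zero
      map_mul' := fun x y => Equiv.addLeft_add _ _ }
  have := map_zpow ψ (Multiplicative.ofAdd a) n
  simpa [ψ] using this.symm

lemma exists_unit_val {p : ℕ} (hp : p.Prime) (l : ℕ) (z : ℤ) (hz : z ≠ 0) :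
    ∃ w : (ZMod (p ^ l))ˣ,
      (z : ZMod (p ^ l)) = (p : ZMod (p ^ l)) ^ (padicValNat p z.natAbs) * w := by
  set k := z.natAbs with hk
  have hk0 : k ≠ 0 := Int.natAbs_ne_zero.mpr hz
  set c := k / p ^ k.factorization p with hc
  have hmul : p ^ k.factorization p * c = k := Nat.ordProj_mul_ordCompl_eq_self k p
  have hnd : ¬ p ∣ c := Nat.not_dvd_ordCompl hp hk0
  have hcop : c.Coprime (p ^ l) :=
    (((Nat.Prime.coprime_iff_not_dvd hp).mpr hnd).symm).pow_right l
  have hv : padicValNat p k = k.factorization p := (Nat.factorization_def k hp).symm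
  have hkz : ((k : ℤ) : ZMod (p ^ l)) = (p : ZMod (p^l)) ^ k.factorization p * (ZMod.unitOfCoprime c hcop : ZMod (p^l)) := by
    rw [ZMod.coe_unitOfCoprime, Int.cast_natCast]
    conv_lhs => rw [← hmul]
    rw [Nat.cast_mul, Nat.cast_pow]
  rcases hz.lt_or_gt with hlt | hlt
  · refine ⟨-ZMod.unitOfCoprime c hcop, ?_⟩
    have : z = -(k : ℤ) := by omega
    rw [this, hv]
    push_cast [hkz]
    ring
  · refine ⟨ZMod.unitOfCoprime c hcop, ?_⟩
    have : z = (k : ℤ) := by omega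
    rw [this, hv, hkz]

/-- Paper's Lemma 3.1 (Mini_Closure), loop case: if `p` is a prime with
`ν_p(n) = ν_p(m)` then `BS(n,m)` has finite quotients in which the image of `a`
has order exactly `p^l`, for every `l`. -/
theorem BS_finite_quotient_order_pow
    (n m : ℤ) (hn : n ≠ 0) (hm : m ≠ 0) (p : ℕ) (hp : p.Prime)
    (hval : padicValNat p n.natAbs = padicValNat p m.natAbs) (l : ℕ) :
    ∃ (Q : Type) (_ : Group Q) (_ : Finite Q) (φ : BS n m →* Q),
      orderOf (φ (BS.a n m)) = p ^ l := by
  haveI : NeZero (p ^ l) := ⟨pow_ne_zero l hp.ne_zero⟩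
  obtain ⟨wn, hn'⟩ := exists_unit_val hp l n hn
  obtain ⟨wm, hm'⟩ := exists_unit_val hp l m hm
  rw [← hval] at hm'
  set u : (ZMod (p ^ l))ˣ := wn * wm⁻¹ with hu
  have key : (u : ZMod (p ^ l)) * (m : ZMod (p ^ l)) = (n : ZMod (p ^ l)) := by
    rw [hn', hm', hu, Units.val_mul]
    linear_combination ((p : ZMod (p ^ l)) ^ padicValNat p n.natAbs *
      (wn : ZMod (p ^ l))) * Units.inv_mul wm
  let T : Equiv.Perm (ZMod (p ^ l)) := MulAction.toPermHom (ZMod (p ^ l))ˣ (ZMod (p ^ l)) u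
  let f : Fin 2 → Equiv.Perm (ZMod (p ^ l)) := ![Equiv.addLeft 1, T]
  have hrel : ∀ r ∈ BSRel n m, FreeGroup.lift f r = 1 := by
    intro r hr
    rw [BSRel, Set.mem_singleton_iff] at hr
    subst hr
    simp only [map_mul, map_zpow, map_inv, FreeGroup.lift_apply_of]
    have hf0 : f 0 = Equiv.addLeft 1 := rfl
    have hf1 : f 1 = T := rfl
    have hTinv : T⁻¹ = MulAction.toPermHom (ZMod (p ^ l))ˣ (ZMod (p ^ l)) u⁻¹ :=
      (map_inv (MulAction.toPermHom (ZMod (p ^ l))ˣ (ZMod (p ^ l))) u).symm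
    rw [hf0, hf1, hTinv]
    ext x
    simp only [T, Equiv.Perm.mul_apply, Equiv.Perm.one_apply, Equiv.zpow_addLeft,
      Equiv.coe_addLeft, MulAction.toPermHom_apply, MulAction.toPerm_apply,
      Units.smul_def, smul_eq_mul, zsmul_eq_mul, Int.cast_neg, mul_one]
    linear_combination (-(1 : ZMod (p ^ l))) * key + x * Units.mul_inv u
  refine ⟨Equiv.Perm (ZMod (p ^ l)), inferInstance, inferInstance,
    PresentedGroup.toGroup hrel, ?_⟩
  have : PresentedGroup.toGroup hrel (BS.a n m) = f 0 := PresentedGroup.toGroup.of hrel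
  rw [this]
  show orderOf (Equiv.addLeft (1 : ZMod (p ^ l))) = p ^ l
  rw [orderOf_addLeft', ZMod.addOrderOf_one]
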